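/- For every integer m ≥ 1 and nonnegative real weights α_0,…,α_m with Σ_{i=0}^m α_i = 1, there exists a binary tree with m+1 leaves whose alphabetic cost satisfies C ≤ H(α_0,…,α_m) + 2 − (m+3)·α_min, where α_min = min{α_0,…,α_m}. -/

import Mathlib

/-- A (full) binary tree: every internal node has exactly two children. -/
inductive BTree where
  | leaf : BTree
  | node : BTree → BTree → BTree

namespace BTree

/-- Depths of the leaves, in left-to-right order. -/
def leafDepths : BTree → List ℕ
  | leaf => [0]
  | node l r => l.leafDepths.map (· + 1) ++ r.leafDepths.map (· + 1)

end BTree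

def costL : List ℝ → List ℕ → ℝ
  | x :: xs, d :: ds => x * (d : ℝ) + costL xs ds
  | _, _ => 0

@[simp] lemma costL_nil (ds : List ℕ) : costL [] ds = 0 := by cases ds <;> rfl
@[simp] lemma costL_nil' (w : List ℝ) : costL w [] = 0 := by cases w <;> rfl
@[simp] lemma costL_cons (x : ℝ) (xs : List ℝ) (d : ℕ) (ds : List ℕ) :
    costL (x :: xs) (d :: ds) = x * (d : ℝ) + costL xs ds := rfl

noncomputable def Gh (w : List ℝ) : ℝ :=
  (w.map (fun x => x * (Real.logb 2 w.sum - Real.logb 2 x))).sum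

lemma negMulLog_ge_aux {q : ℝ} (h1 : 1/2 ≤ q) (h2 : q ≤ 1) :
    (1 - q) * Real.log 2 ≤ Real.negMulLog q := by
  have hc := Real.strictConcaveOn_negMulLog.concaveOn
  have key := hc.2 (show (1/2:ℝ) ∈ Set.Ici (0:ℝ) by norm_num)
    (show (1:ℝ) ∈ Set.Ici (0:ℝ) by norm_num)
    (show (0:ℝ) ≤ 2*(1-q) by linarith) (show (0:ℝ) ≤ 2*q-1 by linarith)
    (show (2*(1-q)) + (2*q-1) = 1 by ring)
  have h12 : Real.negMulLog (1/2) = (1/2) * Real.log 2 := by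
    simp [Real.negMulLog, Real.log_div, Real.log_one]
  have h1' : Real.negMulLog 1 = 0 := by simp [Real.negMulLog]
  rw [h12, h1'] at key
  simp only [smul_eq_mul] at key
  have hq : (2*(1-q)) * (1/2 : ℝ) + (2*q-1) * (1:ℝ) = q := by ring
  rw [hq] at key
  nlinarith [key]

lemma mul_log_eq_negMulLog {L S : ℝ} (h0 : 0 ≤ L) (hS : 0 < S) :
    L * (Real.log S - Real.log L) = S * Real.negMulLog (L / S) := by
  rcases eq_or_lt_of_le h0 with h | h
  · simp [← h, Real.negMulLog]
  · rw [Real.negMulLog, Real.log_div (ne_of_gt h) (ne_of_gt hS)]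
    field_simp
    ring

lemma entsum_ge {L R : ℝ} (h0 : 0 ≤ L) (hLR : L ≤ R) :
    2 * L * Real.log 2 ≤
      L * (Real.log (L + R) - Real.log L) + R * (Real.log (L + R) - Real.log R) := by
  have h0R : 0 ≤ R := le_trans h0 hLR
  rcases eq_or_lt_of_le (by linarith : (0:ℝ) ≤ L + R) with hS | hS
  · have hL : L = 0 := by linarith
    have hR : R = 0 := by linarith
    simp [hL, hR]
  · set S := L + R with hSdef
    have hp : L * (Real.log S - Real.log L) = S * Real.negMulLog (L / S) :=
      mul_log_eq_negMulLog h0 hS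
    have hq : R * (Real.log S - Real.log R) = S * Real.negMulLog (R / S) :=
      mul_log_eq_negMulLog h0R hS
    rw [hp, hq]
    have hpq : L / S + R / S = 1 := by field_simp; exact hSdef.symm
    have hple : L / S ≤ 1/2 := by
      rw [div_le_iff₀ hS]; linarith
    have hq1 : R / S ≤ 1 := by
      rw [div_le_one hS]; linarith
    have hq2 : 1/2 ≤ R / S := by
      rw [le_div_iff₀ hS]; linarith
    have h1 : (L / S) * Real.log 2 ≤ Real.negMulLog (L / S) := by
      rcases eq_or_lt_of_le h0 with h | h
      · simp [← h, Real.negMulLog]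
      · have hps : 0 < L / S := div_pos h hS
        rw [Real.negMulLog]
        have hlog : Real.log (L / S) ≤ Real.log (1/2) :=
          Real.log_le_log hps hple
        have h12 : Real.log (1/2 : ℝ) = - Real.log 2 := by
          rw [show (1/2 : ℝ) = 2⁻¹ by norm_num, Real.log_inv]
        rw [h12] at hlog
        nlinarith [hlog, hps]
    have h2 : (1 - R / S) * Real.log 2 ≤ Real.negMulLog (R / S) :=
      negMulLog_ge_aux hq2 hq1
    have hLS : L / S = 1 - R / S := by linarith
    calc 2 * L * Real.log 2 = S * ((L/S) * Real.log 2 + (1 - R/S) * Real.log 2) := by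
          rw [← hLS]; field_simp; ring
      _ ≤ S * (Real.negMulLog (L/S) + Real.negMulLog (R/S)) := by
          apply mul_le_mul_of_nonneg_left (by linarith) (le_of_lt hS)
      _ = S * Real.negMulLog (L / S) + S * Real.negMulLog (R / S) := by ring

lemma Phi_ge_left {L R : ℝ} (h0 : 0 ≤ L) (hLR : L ≤ R) :
    2 * L ≤ L * (Real.logb 2 (L + R) - Real.logb 2 L)
          + R * (Real.logb 2 (L + R) - Real.logb 2 R) := by
  have hlog2 : 0 < Real.log 2 := Real.log_pos (by norm_num)
  have h := entsum_ge h0 hLR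
  rw [Real.logb, Real.logb, Real.logb]
  calc 2 * L = (2 * L * Real.log 2) / Real.log 2 := by field_simp
      _ ≤ (L * (Real.log (L + R) - Real.log L) + R * (Real.log (L + R) - Real.log R)) / Real.log 2 := by
          gcongr
      _ = L * (Real.log (L + R) / Real.log 2 - Real.log L / Real.log 2)
          + R * (Real.log (L + R) / Real.log 2 - Real.log R / Real.log 2) := by
          field_simp

lemma Phi_ge_right {L R : ℝ} (h0 : 0 ≤ R) (hRL : R ≤ L) :
    2 * R ≤ L * (Real.logb 2 (L + R) - Real.logb 2 L)
          + R * (Real.logb 2 (L + R) - Real.logb 2 R) := by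
  have := Phi_ge_left h0 hRL
  rw [add_comm R L] at this
  linarith
lemma split_exists (w : List ℝ) (h2 : 2 ≤ w.length) (hw0 : ∀ x ∈ w, (0:ℝ) ≤ x) :
    ∃ u v : List ℝ, w = u ++ v ∧ 0 < u.length ∧ 0 < v.length ∧
      ((u.sum ≤ v.sum ∧ v.sum - u.sum ≤ v.getD 0 0) ∨
       (v.sum ≤ u.sum ∧ u.sum - v.sum ≤ u.getD (u.length - 1) 0)) := by
  classical
  -- first produce the split index with the property stated via take/drop
  have key : ∃ k, 1 ≤ k ∧ k < w.length ∧
      (((w.take k).sum ≤ (w.drop k).sum ∧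
          (w.drop k).sum - (w.take k).sum ≤ w.getD k 0) ∨
       ((w.drop k).sum ≤ (w.take k).sum ∧
          (w.take k).sum - (w.drop k).sum ≤ w.getD (k-1) 0)) := by
    set S := w.sum with hS
    have hsum : ∀ k, (w.take k).sum + (w.drop k).sum = S :=
      fun k => List.sum_take_add_sum_drop w k
    have htake0 : ∀ k, 0 ≤ (w.take k).sum :=
      fun k => List.sum_nonneg (fun x hx => hw0 x (List.take_subset k w hx))
    have hdrop0 : ∀ k, 0 ≤ (w.drop k).sum :=
      fun k => List.sum_nonneg (fun x hx => hw0 x (List.drop_subset k w hx))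
    have hsucc : ∀ k, k < w.length → (w.take (k+1)).sum = (w.take k).sum + w.getD k 0 := by
      intro k hk
      rw [List.getD_eq_getElem _ _ hk]
      exact List.sum_take_succ w k hk
    by_cases h : ∃ j, 1 ≤ j ∧ j < w.length ∧ S ≤ 2 * (w.take j).sum
    · set c := Nat.find h with hc
      obtain ⟨hc1, hclen, hcS⟩ := Nat.find_spec h
      rcases eq_or_lt_of_le hc1 with hc1' | hc1'
      · -- c = 1
        refine ⟨1, le_refl 1, by omega, Or.inr ⟨?_, ?_⟩⟩
        · have := hsum 1; rw [← hc1'] at hcS; linarith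
        · have h1 : (w.take 1).sum = w.getD 0 0 := by
            have := hsucc 0 (by omega); simpa using this
          have := hdrop0 1
          simp only [Nat.sub_self]
          rw [← h1]; linarith
      · -- c ≥ 2
        have hc2 : 2 ≤ c := hc1'
        have hnot := Nat.find_min h (show c - 1 < c by omega)
        have hlt : 2 * (w.take (c-1)).sum < S := by
          by_contra hcon
          exact hnot ⟨by omega, by omega, by linarith⟩
        have hstep : (w.take c).sum = (w.take (c-1)).sum + w.getD (c-1) 0 := by
          have := hsucc (c-1) (by omega)
          rw [show c - 1 + 1 = c by omega] at this
          exact this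
        by_cases hd : 2 * (w.take c).sum - S ≤ S - 2 * (w.take (c-1)).sum
        · refine ⟨c, by omega, hclen, Or.inr ⟨?_, ?_⟩⟩
          · have := hsum c; linarith
          · have := hsum c; linarith
        · refine ⟨c - 1, by omega, by omega, Or.inl ⟨?_, ?_⟩⟩
          · have := hsum (c-1); linarith
          · have := hsum (c-1)
            have hg : w.getD (c-1-1) 0 = w.getD (c-1) 0 → True := fun _ => trivial
            -- goal: drop sum - take sum ≤ w.getD (c-1) 0
            push_neg at hd
            linarith
    · push_neg at h
      refine ⟨w.length - 1, by omega, by omega, Or.inl ⟨?_, ?_⟩⟩ <;>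
      · have hlt : 2 * (w.take (w.length - 1)).sum < S := by
          by_contra hcon
          exact absurd (h (w.length - 1) (by omega) (by omega)) (by push_neg at hcon ⊢; linarith)
        have h1 := hsucc (w.length - 1) (by omega)
        rw [show w.length - 1 + 1 = w.length by omega, List.take_length] at h1
        have h3 := hsum (w.length - 1)
        have h4 := htake0 (w.length - 1)
        linarith
  obtain ⟨k, hk1, hklen, hsp⟩ := key
  refine ⟨w.take k, w.drop k, (List.take_append_drop k w).symm, ?_, ?_, ?_⟩
  · rw [List.length_take]; omega
  · rw [List.length_drop]; omega
  · rcases hsp with ⟨h1, h2⟩ | ⟨h1, h2⟩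
    · left
      refine ⟨h1, ?_⟩
      have hv : (w.drop k).getD 0 0 = w.getD k 0 := by
        rw [List.getD_eq_getElem _ _ (by rw [List.length_drop]; omega),
            List.getD_eq_getElem _ _ hklen]
        simp [List.getElem_drop]
      rw [hv]; exact h2
    · right
      refine ⟨h1, ?_⟩
      have hlt : (w.take k).length = k := by rw [List.length_take]; omega
      have hu : (w.take k).getD ((w.take k).length - 1) 0 = w.getD (k-1) 0 := by
        rw [hlt, List.getD_eq_getElem _ _ (by rw [hlt]; omega),
            List.getD_eq_getElem _ _ (show k - 1 < w.length by omega)]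
        simp [List.getElem_take]
      rw [hu]; exact h2

lemma costL_map_succ (w : List ℝ) (ds : List ℕ) (h : w.length = ds.length) :
    costL w (ds.map (· + 1)) = costL w ds + w.sum := by
  induction w generalizing ds with
  | nil => simp
  | cons x xs ih =>
    cases ds with
    | nil => simp at h
    | cons d ds =>
      have := ih ds (by simpa using h)
      simp only [List.map_cons, costL_cons, List.sum_cons, this]
      push_cast
      ring

lemma costL_append (u v : List ℝ) (du dv : List ℕ) (h : u.length = du.length) :
    costL (u ++ v) (du ++ dv) = costL u du + costL v dv := by
  induction u generalizing du with
  | nil => cases du with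
    | nil => simp
    | cons d ds => simp at h
  | cons x xs ih =>
    cases du with
    | nil => simp at h
    | cons d ds =>
      simp only [List.cons_append, costL_cons, ih ds (by simpa using h)]
      ring

lemma costL_node (u v : List ℝ) (Tu Tv : BTree)
    (hu : Tu.leafDepths.length = u.length) (hv : Tv.leafDepths.length = v.length) :
    costL (u ++ v) (BTree.node Tu Tv).leafDepths
      = costL u Tu.leafDepths + costL v Tv.leafDepths + (u.sum + v.sum) := by
  show costL (u ++ v) (Tu.leafDepths.map (· + 1) ++ Tv.leafDepths.map (· + 1)) = _
  rw [costL_append _ _ _ _ (by simp [hu]),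
      costL_map_succ u Tu.leafDepths hu.symm, costL_map_succ v Tv.leafDepths hv.symm]
  ring

lemma Hsum_shift (l : List ℝ) (a b : ℝ) :
    (l.map (fun x => x * (a - Real.logb 2 x))).sum
      = (l.map (fun x => x * (b - Real.logb 2 x))).sum + (a - b) * l.sum := by
  induction l with
  | nil => simp
  | cons x xs ih => simp only [List.map_cons, List.sum_cons, ih]; ring

lemma Gh_append (u v : List ℝ) :
    Gh (u ++ v) = Gh u + Gh v +
      (u.sum * (Real.logb 2 (u.sum + v.sum) - Real.logb 2 u.sum)
        + v.sum * (Real.logb 2 (u.sum + v.sum) - Real.logb 2 v.sum)) := by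
  unfold Gh
  rw [List.map_append, List.sum_append, List.sum_append]
  rw [Hsum_shift u (Real.logb 2 (u.sum + v.sum)) (Real.logb 2 u.sum),
      Hsum_shift v (Real.logb 2 (u.sum + v.sum)) (Real.logb 2 v.sum)]
  ring

lemma Gh_singleton (x : ℝ) : Gh [x] = 0 := by
  simp [Gh]

lemma costL_leaf (x : ℝ) : costL [x] BTree.leaf.leafDepths = 0 := by
  simp [BTree.leafDepths]



lemma horibe_main (n : ℕ) : ∀ (w : List ℝ) (μ : ℝ), w.length = n → 0 ≤ μ →
    (∀ x ∈ w, μ ≤ x) → 2 ≤ w.length →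
    ∃ T : BTree, T.leafDepths.length = w.length ∧
      costL w T.leafDepths ≤ Gh w + 2 * w.sum - (w.length : ℝ) * μ
        - w.getD 0 0 - w.getD (w.length - 1) 0 := by
  induction n using Nat.strong_induction_on with
  | _ n ih =>
  intro w μ hn hμ0 hwμ hw2
  have hw0 : ∀ x ∈ w, (0:ℝ) ≤ x := fun x hx => le_trans hμ0 (hwμ x hx)
  obtain ⟨u, v, hw, hu1, hv1, hsp⟩ := split_exists w hw2 hw0
  subst hw
  have hlen : u.length + v.length = n := by
    rw [← hn, List.length_append]
  have huμ : ∀ x ∈ u, μ ≤ x := fun x hx => hwμ x (List.mem_append_left _ hx)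
  have hvμ : ∀ x ∈ v, μ ≤ x := fun x hx => hwμ x (List.mem_append_right _ hx)
  have hL0 : 0 ≤ u.sum := List.sum_nonneg (fun x hx => le_trans hμ0 (huμ x hx))
  have hR0 : 0 ≤ v.sum := List.sum_nonneg (fun x hx => le_trans hμ0 (hvμ x hx))
  have h0 : (u ++ v).getD 0 0 = u.getD 0 0 := List.getD_append _ _ _ _ hu1
  have hlast : (u ++ v).getD ((u ++ v).length - 1) 0 = v.getD (v.length - 1) 0 := by
    rw [List.getD_append_right _ _ _ _ (by rw [List.length_append]; omega)]
    congr 1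
    rw [List.length_append]
    omega
  have hbk : μ ≤ v.getD 0 0 := by
    rw [List.getD_eq_getElem _ _ (by omega)]
    exact hvμ _ (List.getElem_mem _)
  have hbk1 : μ ≤ u.getD (u.length - 1) 0 := by
    rw [List.getD_eq_getElem _ _ (by omega)]
    exact huμ _ (List.getElem_mem _)
  have hu0μ : μ ≤ u.getD 0 0 := by
    rw [List.getD_eq_getElem _ _ (by omega)]
    exact huμ _ (List.getElem_mem _)
  have hvlμ : μ ≤ v.getD (v.length - 1) 0 := by
    rw [List.getD_eq_getElem _ _ (by omega)]
    exact hvμ _ (List.getElem_mem _)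
  have HU : ∃ (Tu : BTree) (Au : ℝ), Tu.leafDepths.length = u.length ∧
      costL u Tu.leafDepths ≤ Gh u + 2 * u.sum - Au ∧
      (((u.length : ℝ) * μ = μ ∧ Au = 2 * u.sum ∧ u.getD 0 0 = u.sum ∧
          u.getD (u.length - 1) 0 = u.sum) ∨
        (2 ≤ u.length ∧ Au = (u.length : ℝ) * μ + u.getD 0 0 + u.getD (u.length - 1) 0)) := by
    rcases Nat.lt_or_ge u.length 2 with h2 | h2
    · have h1 : u.length = 1 := by omega
      obtain ⟨x, rfl⟩ := List.length_eq_one_iff.mp h1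
      exact ⟨BTree.leaf, 2 * List.sum [x], rfl,
        by rw [costL_leaf, Gh_singleton]; simp,
        Or.inl ⟨by norm_num, rfl, by simp, by simp⟩⟩
    · obtain ⟨Tu, hTu, hcu⟩ := ih u.length (by omega) u μ rfl hμ0 huμ h2
      exact ⟨Tu, (u.length : ℝ) * μ + u.getD 0 0 + u.getD (u.length - 1) 0, hTu,
        by linarith, Or.inr ⟨h2, rfl⟩⟩
  have HV : ∃ (Tv : BTree) (Av : ℝ), Tv.leafDepths.length = v.length ∧
      costL v Tv.leafDepths ≤ Gh v + 2 * v.sum - Av ∧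
      (((v.length : ℝ) * μ = μ ∧ Av = 2 * v.sum ∧ v.getD 0 0 = v.sum ∧
          v.getD (v.length - 1) 0 = v.sum) ∨
        (2 ≤ v.length ∧ Av = (v.length : ℝ) * μ + v.getD 0 0 + v.getD (v.length - 1) 0)) := by
    rcases Nat.lt_or_ge v.length 2 with h2 | h2
    · have h1 : v.length = 1 := by omega
      obtain ⟨x, rfl⟩ := List.length_eq_one_iff.mp h1
      exact ⟨BTree.leaf, 2 * List.sum [x], rfl,
        by rw [costL_leaf, Gh_singleton]; simp,
        Or.inl ⟨by norm_num, rfl, by simp, by simp⟩⟩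
    · obtain ⟨Tv, hTv, hcv⟩ := ih v.length (by omega) v μ rfl hμ0 hvμ h2
      exact ⟨Tv, (v.length : ℝ) * μ + v.getD 0 0 + v.getD (v.length - 1) 0, hTv,
        by linarith, Or.inr ⟨h2, rfl⟩⟩
  obtain ⟨Tu, Au, hTu, hcu, hAu⟩ := HU
  obtain ⟨Tv, Av, hTv, hcv, hAv⟩ := HV
  refine ⟨BTree.node Tu Tv, ?_, ?_⟩
  · show (Tu.leafDepths.map (· + 1) ++ Tv.leafDepths.map (· + 1)).length = _
    rw [List.length_append, List.length_append, List.length_map, List.length_map, hTu, hTv]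
  · rw [costL_node u v Tu Tv hTu hTv, Gh_append, List.sum_append, h0, hlast,
      List.length_append]
    push_cast
    rcases hsp with ⟨hs1, hs2⟩ | ⟨hs1, hs2⟩
    · have hΦ := Phi_ge_left hL0 hs1
      rcases hAu with ⟨ha1, ha2, ha3, ha4⟩ | ⟨ha1, ha2⟩ <;>
        rcases hAv with ⟨hb1, hb2, hb3, hb4⟩ | ⟨hb1, hb2⟩ <;>
        linarith [hΦ, hcu, hcv, hbk, hbk1, hu0μ, hvlμ, hL0, hR0, hs1, hs2]
    · have hΦ := Phi_ge_right hR0 hs1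
      rcases hAu with ⟨ha1, ha2, ha3, ha4⟩ | ⟨ha1, ha2⟩ <;>
        rcases hAv with ⟨hb1, hb2, hb3, hb4⟩ | ⟨hb1, hb2⟩ <;>
        linarith [hΦ, hcu, hcv, hbk, hbk1, hu0μ, hvlμ, hL0, hR0, hs1, hs2]


lemma costL_ofFn {n : ℕ} (α : Fin n → ℝ) (ds : List ℕ) (h : ds.length = n) :
    costL (List.ofFn α) ds = ∑ i : Fin n, α i * (ds.getD i 0 : ℝ) := by
  induction n generalizing ds with
  | zero => simp [List.ofFn_zero]
  | succ n ihn =>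
    cases ds with
    | nil => simp at h
    | cons d ds =>
      rw [List.ofFn_succ, Fin.sum_univ_succ]
      simp only [costL_cons]
      rw [ihn (fun i => α i.succ) ds (by simpa using h)]
      simp [Fin.val_succ, List.getD_cons_succ]

/-- Horibe's refinement of the Method 1 guarantee in the alphabetic case
(all internal weights zero): there is a binary tree with `m+1` leaves whose
alphabetic cost is at most `H(α₀,…,α_m) + 2 - (m+3)·α_min`. -/
theorem nearly_optimal_alphabetic_tree_method1
    (m : ℕ) (hm : 1 ≤ m)
    (α : Fin (m + 1) → ℝ) (hα : ∀ i, 0 ≤ α i)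
    (hsum : ∑ i, α i = 1) :
    ∃ T : BTree,
      T.leafDepths.length = m + 1 ∧
      (∑ i : Fin (m + 1), α i * (T.leafDepths.getD i 0 : ℝ))
        ≤ (∑ i, α i * Real.logb 2 (α i)⁻¹) + 2
            - (m + 3) * (Finset.univ.inf' Finset.univ_nonempty α) := by
  set μ := Finset.univ.inf' Finset.univ_nonempty α with hμdef
  have hμle : ∀ i, μ ≤ α i := fun i => Finset.inf'_le α (Finset.mem_univ i)
  have hμ0 : 0 ≤ μ := by
    obtain ⟨i, -, hi⟩ := Finset.exists_mem_eq_inf' Finset.univ_nonempty α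
    rw [hμdef, hi]; exact hα i
  set w := List.ofFn α with hwdef
  have hlw : w.length = m + 1 := List.length_ofFn
  have hwμ : ∀ x ∈ w, μ ≤ x := by
    intro x hx
    rw [hwdef, List.mem_ofFn] at hx
    obtain ⟨i, rfl⟩ := hx
    exact hμle i
  have hsumw : w.sum = 1 := by rw [hwdef, List.sum_ofFn]; exact hsum
  obtain ⟨T, hT, hb⟩ := horibe_main (m+1) w μ hlw hμ0 hwμ (by rw [hlw]; omega)
  refine ⟨T, by rw [hT, hlw], ?_⟩
  rw [← costL_ofFn α T.leafDepths (by rw [hT, hlw])]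
  have hGh : Gh w = ∑ i, α i * Real.logb 2 (α i)⁻¹ := by
    unfold Gh
    rw [hsumw, Real.logb_one, hwdef, List.map_ofFn, List.sum_ofFn]
    apply Finset.sum_congr rfl
    intro i _
    simp only [Function.comp_apply, Real.logb_inv]
    ring
  have h00 : w.getD 0 0 = α 0 := by
    rw [hwdef]
    rw [List.getD_eq_getElem _ _ (by rw [List.length_ofFn]; omega)]
    simp
  have hlast : w.getD (w.length - 1) 0 = α ⟨m, by omega⟩ := by
    rw [hwdef, List.length_ofFn, show m + 1 - 1 = m from rfl]
    rw [List.getD_eq_getElem _ _ (by rw [List.length_ofFn]; omega), List.getElem_ofFn]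
  rw [hGh, hsumw, h00, hlast] at hb
  rw [hlw] at hb
  rw [← hwdef]
  have h1 := hμle 0
  have h2 := hμle ⟨m, by omega⟩
  push_cast at hb ⊢
  linarith
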